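/- Let x₀ ∈ ℝⁿ, X₀ = x₀x₀ᵀ, and let Λ be a real symmetric n×n matrix. Suppose: (a) vᵀΛv ≥ 0 for every v ∈ ℝⁿ with vᵀx₀ = 0; and (b) for every q ∈ ℝⁿ with qᵀx₀ = 0 and ⟨Λ, qqᵀ⟩ = 0, one has ⟨Λ, x₀qᵀ + qx₀ᵀ⟩ = 0. Then there exists δ > 0 such that X₀ + δΛ is positive semidefinite. -/

import Mathlib

open Matrix


lemma dot_symm_swap {n : ℕ} {M : Matrix (Fin n) (Fin n) ℝ} (hM : M.IsSymm) (a b : Fin n → ℝ) :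
    a ⬝ᵥ M.mulVec b = M.mulVec a ⬝ᵥ b := by
  rw [dotProduct_mulVec, ← Matrix.mulVec_transpose, hM.eq]

lemma trace_mul_vecMulVec {n : ℕ} (M : Matrix (Fin n) (Fin n) ℝ) (a b : Fin n → ℝ) :
    (M * vecMulVec a b).trace = b ⬝ᵥ M.mulVec a := by
  simp only [Matrix.trace, Matrix.diag, Matrix.mul_apply, vecMulVec_apply, dotProduct,
    Matrix.mulVec, Finset.mul_sum]
  refine Finset.sum_congr rfl fun i _ => Finset.sum_congr rfl fun j _ => by ring

lemma vecMulVec_mulVec' {n : ℕ} (a b v : Fin n → ℝ) :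
    (vecMulVec a b).mulVec v = (b ⬝ᵥ v) • a := by
  ext i
  simp only [Matrix.mulVec, vecMulVec_apply, dotProduct, Pi.smul_apply, smul_eq_mul,
    Finset.sum_mul, Finset.mul_sum]
  exact Finset.sum_congr rfl fun j _ => by ring

lemma exists_solution_of_perp_ker {n : ℕ} (S : Matrix (Fin n) (Fin n) ℝ) (hS : S.IsSymm)
    (w : Fin n → ℝ) (hw : ∀ v : Fin n → ℝ, S.mulVec v = 0 → w ⬝ᵥ v = 0) :
    ∃ u : Fin n → ℝ, S.mulVec u = w := by
  classical
  set T := Matrix.toEuclideanLin S with hT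
  have hTapp : ∀ v : EuclideanSpace ℝ (Fin n), T v = (WithLp.equiv 2 _).symm
      (S.mulVec ((WithLp.equiv 2 _) v)) := fun v => Matrix.toEuclideanLin_apply S v
  have hinner : ∀ a b : EuclideanSpace ℝ (Fin n),
      (inner ℝ a b : ℝ) = ((WithLp.equiv 2 _) a) ⬝ᵥ ((WithLp.equiv 2 _) b) := by
    intro a b
    simp [PiLp.inner_apply, RCLike.inner_apply, dotProduct, mul_comm]
  have hsym : ∀ a b : EuclideanSpace ℝ (Fin n), (inner ℝ (T a) b : ℝ) = inner ℝ a (T b) := by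
    intro a b
    rw [hinner, hinner, hTapp, hTapp]
    exact (dot_symm_swap hS _ _).symm
  have hrange : LinearMap.range T = (LinearMap.ker T)ᗮ := by
    apply Submodule.eq_of_le_of_finrank_eq
    · rintro _ ⟨y, rfl⟩
      rw [Submodule.mem_orthogonal]
      intro u hu
      have : T u = 0 := hu
      rw [← hsym, this, inner_zero_left]
    · have h1 := LinearMap.finrank_range_add_finrank_ker T
      have h2 := Submodule.finrank_add_finrank_orthogonal (LinearMap.ker T)
      omega
  have hwmem : ((WithLp.equiv 2 _).symm w : EuclideanSpace ℝ (Fin n)) ∈ (LinearMap.ker T)ᗮ := by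
    rw [Submodule.mem_orthogonal]
    intro u hu
    have h0 : S.mulVec ((WithLp.equiv 2 _) u) = 0 := by
      have : T u = 0 := hu
      rw [hTapp] at this
      simpa using congrArg (WithLp.equiv 2 (Fin n → ℝ)) this
    rw [hinner]
    simpa [dotProduct_comm] using hw _ h0
  rw [← hrange] at hwmem
  obtain ⟨u, hu⟩ := hwmem
  refine ⟨(WithLp.equiv 2 _) u, ?_⟩
  rw [hTapp] at hu
  simpa using congrArg (WithLp.equiv 2 (Fin n → ℝ)) hu

/-- **Lemma 4, sufficiency direction.** If (a) the compression of `Λ` to `{x₀}ᗮ` is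
positive semidefinite and (b) any `q ⊥ x₀` with `⟨Λ, qqᵀ⟩ = 0` satisfies
`⟨Λ, x₀qᵀ + qx₀ᵀ⟩ = 0`, then `x₀x₀ᵀ + δΛ ⪰ 0` for some `δ > 0`. -/
theorem psd_perturbation_sufficient {n : ℕ}
    (x₀ : Fin n → ℝ) (X₀ Λ : Matrix (Fin n) (Fin n) ℝ)
    (hX₀ : X₀ = vecMulVec x₀ x₀)
    (hΛ : Λ.IsSymm)
    (ha : ∀ v : Fin n → ℝ, v ⬝ᵥ x₀ = 0 → 0 ≤ v ⬝ᵥ Λ.mulVec v)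
    (hb : ∀ q : Fin n → ℝ, q ⬝ᵥ x₀ = 0 → (Λ * vecMulVec q q).trace = 0 →
      (Λ * (vecMulVec x₀ q + vecMulVec q x₀)).trace = 0) :
    ∃ δ : ℝ, 0 < δ ∧ (X₀ + δ • Λ).PosSemidef := by
  -- symmetry swap for Λ in the convenient orientation
  have hΛswap : ∀ a b : Fin n → ℝ, a ⬝ᵥ Λ.mulVec b = b ⬝ᵥ Λ.mulVec a := by
    intro a b; rw [dot_symm_swap hΛ, dotProduct_comm]
  -- reformulated hypothesis (b)
  have hb' : ∀ q : Fin n → ℝ, q ⬝ᵥ x₀ = 0 → q ⬝ᵥ Λ.mulVec q = 0 → x₀ ⬝ᵥ Λ.mulVec q = 0 := by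
    intro q h1 h2
    have h3 := hb q h1 (by rw [trace_mul_vecMulVec]; exact h2)
    rw [mul_add, Matrix.trace_add, trace_mul_vecMulVec, trace_mul_vecMulVec] at h3
    have h4 : q ⬝ᵥ Λ.mulVec x₀ = x₀ ⬝ᵥ Λ.mulVec q := hΛswap q x₀
    linarith
  rcases eq_or_ne x₀ 0 with h0 | h0
  · -- degenerate case : Λ itself is PSD
    refine ⟨1, one_pos, ?_⟩
    have hX0 : X₀ = 0 := by
      rw [hX₀, h0]; ext i j; simp [vecMulVec_apply]
    have hM : X₀ + (1:ℝ) • Λ = Λ := by rw [hX0]; simp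
    rw [hM]
    refine posSemidef_iff_dotProduct_mulVec.mpr ⟨?_, ?_⟩
    · rw [Matrix.IsHermitian, conjTranspose_eq_transpose_of_trivial]; exact hΛ
    · intro x
      simpa using ha x (by simp [h0])
  · have hc0 : 0 ≤ x₀ ⬝ᵥ x₀ := Finset.sum_nonneg fun i _ => mul_self_nonneg _
    have hc : 0 < x₀ ⬝ᵥ x₀ := lt_of_le_of_ne hc0 (fun h => h0 (dotProduct_self_eq_zero.mp h.symm))
    set c := x₀ ⬝ᵥ x₀ with hcdef
    set P := (1 : Matrix (Fin n) (Fin n) ℝ) - c⁻¹ • vecMulVec x₀ x₀ with hPdef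
    have hPmul : ∀ v, P.mulVec v = v - ((x₀ ⬝ᵥ v) * c⁻¹) • x₀ := by
      intro v
      rw [hPdef, Matrix.sub_mulVec, Matrix.one_mulVec, Matrix.smul_mulVec,
        vecMulVec_mulVec', smul_smul, mul_comm]
    have hPx : ∀ v, (P.mulVec v) ⬝ᵥ x₀ = 0 := by
      intro v
      rw [hPmul, sub_dotProduct, smul_dotProduct, dotProduct_comm v x₀, ← hcdef, smul_eq_mul]
      rw [inv_mul_cancel_right₀ (ne_of_gt hc), sub_self]
    have hPsymm : P.IsSymm := by
      rw [Matrix.IsSymm, hPdef, transpose_sub, transpose_smul, transpose_one]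
      congr 1
      congr 1
      ext i j
      simp [transpose_apply, vecMulVec_apply, mul_comm]
    set S := P * Λ * P with hSdef
    have hSsymm : S.IsSymm := by
      rw [Matrix.IsSymm, hSdef, transpose_mul, transpose_mul, hPsymm.eq, hΛ.eq,
        Matrix.mul_assoc]
    have hSbil : ∀ a b, a ⬝ᵥ S.mulVec b = (P.mulVec a) ⬝ᵥ Λ.mulVec (P.mulVec b) := by
      intro a b
      rw [hSdef, ← Matrix.mulVec_mulVec, ← Matrix.mulVec_mulVec, dot_symm_swap hPsymm]
    have hSpsd : ∀ v, 0 ≤ v ⬝ᵥ S.mulVec v := fun v => by rw [hSbil]; exact ha _ (hPx v)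
    have hSswap : ∀ a b : Fin n → ℝ, a ⬝ᵥ S.mulVec b = b ⬝ᵥ S.mulVec a := by
      intro a b; rw [dot_symm_swap hSsymm, dotProduct_comm]
    set w := P.mulVec (Λ.mulVec x₀) with hwdef
    have hwv : ∀ v, w ⬝ᵥ v = x₀ ⬝ᵥ Λ.mulVec (P.mulVec v) := by
      intro v
      rw [hwdef, ← dot_symm_swap hPsymm, ← dot_symm_swap hΛ]
    -- w is orthogonal to the kernel of S
    have hker : ∀ v, S.mulVec v = 0 → w ⬝ᵥ v = 0 := by
      intro v hv
      have hq : (P.mulVec v) ⬝ᵥ x₀ = 0 := hPx v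
      have h00 : v ⬝ᵥ S.mulVec v = 0 := by rw [hv]; simp
      rw [hSbil] at h00
      rw [hwv]
      exact hb' _ hq h00
    obtain ⟨u, hu⟩ := exists_solution_of_perp_ker S hSsymm w hker
    -- Cauchy–Schwarz for the PSD form of S
    have cs : ∀ a b : Fin n → ℝ,
        (a ⬝ᵥ S.mulVec b)^2 ≤ (a ⬝ᵥ S.mulVec a) * (b ⬝ᵥ S.mulVec b) := by
      intro a b
      have key : ∀ t : ℝ, 0 ≤ (b ⬝ᵥ S.mulVec b) * (t*t) + (2*(a ⬝ᵥ S.mulVec b)) * t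
          + (a ⬝ᵥ S.mulVec a) := by
        intro t
        have h := hSpsd (a + t • b)
        simp only [Matrix.mulVec_add, Matrix.mulVec_smul, dotProduct_add, add_dotProduct,
          dotProduct_smul, smul_dotProduct, smul_eq_mul] at h
        rw [hSswap b a] at h
        nlinarith [h]
      have hd := discrim_le_zero key
      rw [discrim] at hd
      nlinarith [hd]
    set Λ₀ := x₀ ⬝ᵥ Λ.mulVec x₀ with hΛ₀def
    set C := u ⬝ᵥ S.mulVec u with hCdef
    have hC : 0 ≤ C := hSpsd u
    set D := |Λ₀| + C + 1 with hDdef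
    have hD : 0 < D := by have := abs_nonneg Λ₀; linarith
    set δ := c^2 / D with hδdef
    have hδ : 0 < δ := by positivity
    have hδD : δ * D = c^2 := div_mul_cancel₀ _ (ne_of_gt hD)
    refine ⟨δ, hδ, posSemidef_iff_dotProduct_mulVec.mpr ⟨?_, ?_⟩⟩
    · -- Hermitian
      rw [Matrix.IsHermitian, conjTranspose_eq_transpose_of_trivial, transpose_add,
        transpose_smul, hΛ.eq, hX₀]
      congr 1
      ext i j
      simp [transpose_apply, vecMulVec_apply, mul_comm]
    · intro x
      have hstar : star x = x := by ext i; simp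
      rw [hstar]
      set α := (x₀ ⬝ᵥ x) / c with hαdef
      set q := P.mulVec x with hqdef
      set s := x ⬝ᵥ S.mulVec x with hsdef
      set ℓ := w ⬝ᵥ x with hℓdef
      have hs : 0 ≤ s := hSpsd x
      have hαc : α * c = x₀ ⬝ᵥ x := div_mul_cancel₀ _ (ne_of_gt hc)
      have hx : x = α • x₀ + q := by
        rw [hqdef, hPmul, hαdef, div_eq_mul_inv]
        abel
      -- quadratic form of Λ at x
      have f1 : x ⬝ᵥ Λ.mulVec x = α^2 * Λ₀ + 2*α*ℓ + s := by
        have hℓq : ℓ = x₀ ⬝ᵥ Λ.mulVec q := by rw [hℓdef, hwv, hqdef]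
        have hsq : s = q ⬝ᵥ Λ.mulVec q := by rw [hsdef, hSbil, hqdef]
        calc x ⬝ᵥ Λ.mulVec x = (α • x₀ + q) ⬝ᵥ Λ.mulVec (α • x₀ + q) := by rw [← hx]
        _ = α^2 * Λ₀ + 2*α*(x₀ ⬝ᵥ Λ.mulVec q) + q ⬝ᵥ Λ.mulVec q := by
            simp only [Matrix.mulVec_add, Matrix.mulVec_smul, dotProduct_add, add_dotProduct,
              dotProduct_smul, smul_dotProduct, smul_eq_mul]
            rw [hΛswap q x₀, hΛ₀def]
            ring
        _ = α^2 * Λ₀ + 2*α*ℓ + s := by rw [← hℓq, ← hsq]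
      -- the linear term is controlled
      have f2 : ℓ^2 ≤ (C+1) * s := by
        have hℓu : ℓ = u ⬝ᵥ S.mulVec x := by rw [hℓdef, ← hu, ← dot_symm_swap hSsymm]
        have := cs u x
        rw [← hℓu, ← hCdef, ← hsdef] at this
        nlinarith [this, hs]
      -- the quadratic form of X₀ at x
      have f3 : x ⬝ᵥ X₀.mulVec x = (α*c)^2 := by
        rw [hX₀, vecMulVec_mulVec', dotProduct_smul, smul_eq_mul, dotProduct_comm x x₀, hαc]
        ring
      have expand : x ⬝ᵥ (X₀ + δ • Λ).mulVec x
          = (α*c)^2 + δ * (α^2 * Λ₀ + 2*α*ℓ + s) := by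
        rw [Matrix.add_mulVec, dotProduct_add, Matrix.smul_mulVec, dotProduct_smul,
          smul_eq_mul, f1, f3]
      rw [expand]
      -- final arithmetic
      have hC1 : (0:ℝ) < C + 1 := by linarith
      have h1 : 0 ≤ δ * ((C+1)*α + ℓ)^2 := mul_nonneg hδ.le (sq_nonneg _)
      have h2 : 0 ≤ δ * ((C+1)*s - ℓ^2) := mul_nonneg hδ.le (by linarith)
      have h5 : 0 ≤ (C+1) * α^2 * (c^2 + δ*Λ₀ - δ*(C+1)) := by
        have habs : -|Λ₀| ≤ Λ₀ := neg_abs_le Λ₀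
        have hkey : 0 ≤ c^2 + δ*Λ₀ - δ*(C+1) := by nlinarith [hδD, hδ, habs]
        positivity
      have hmain : 0 ≤ (C+1) * ((α*c)^2 + δ * (α^2 * Λ₀ + 2*α*ℓ + s)) := by linarith [h1, h2, h5]
      exact (mul_nonneg_iff_of_pos_left hC1).mp hmain
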